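/- For every C∞-word w, at least one of the words 1w and 2w is a C∞-word, and at least one of the words w1 and w2 is a C∞-word. -/
import Mathlib


namespace CInfWords

open scoped Classical

/-- Run-length encoding Δ of a word. -/
def rle : List ℕ → List ℕ
  | [] => []
  | [_] => [1]
  | a :: b :: l =>
    if a = b then
      match rle (b :: l) with
      | [] => [1]
      | c :: r => (c + 1) :: r
    else 1 :: rle (b :: l)

/-- Erase a leading `1`, if any. -/
def trim1 : List ℕ → List ℕ
  | 1 :: l => l
  | l => l

/-- The derivative `D`: the run-length encoding with the first and/or the last
symbol erased when they are equal to `1`. -/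
def D (w : List ℕ) : List ℕ := trim1 ((trim1 (rle w).reverse).reverse)

/-- Words over Σ = {1,2}. -/
def IsWord (w : List ℕ) : Prop := ∀ x ∈ w, x = 1 ∨ x = 2

/-- Words over Σ₀ = {0,1,2}. -/
def IsWord0 (w : List ℕ) : Prop := ∀ x ∈ w, x = 0 ∨ x = 1 ∨ x = 2

/-- Σ₀^{++}: words over Σ₀ that are empty or begin with a nonzero symbol. -/
def Spp (w : List ℕ) : Prop := IsWord0 w ∧ (w = [] ∨ w.headI ≠ 0)

/-- C^∞-words: every iterated derivative is a word over Σ = {1,2}. -/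
def Cinf (w : List ℕ) : Prop := ∀ k, IsWord (D^[k] w)

/-- The height of a C^∞-word: the least k with D^[k] w = ε. -/
noncomputable def height (w : List ℕ) : ℕ := sInf {k | D^[k] w = []}

/-- The root of a C^∞-word of height k > 0: its (k-1)-st derivative. -/
noncomputable def root (w : List ℕ) : List ℕ := D^[height w - 1] w

/-- `v` is a primitive of `w`. -/
def Primitive (v w : List ℕ) : Prop := IsWord v ∧ D v = w

/-- The complement: swap 1's and 2's. -/
def compl (w : List ℕ) : List ℕ := w.map (fun x => 3 - x)

/-- Minimal C^∞-words: every derivative is a shortest primitive of the next one. -/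
def Minimal (w : List ℕ) : Prop :=
  Cinf w ∧ 0 < height w ∧
    ∀ j, j + 2 ≤ height w → ∀ v, Primitive v (D^[j+1] w) → (D^[j] w).length ≤ v.length

/-- Maximal C^∞-words: every derivative is a longest primitive of the next one. -/
def Maximal (w : List ℕ) : Prop :=
  Cinf w ∧ 0 < height w ∧
    ∀ j, j + 2 ≤ height w → ∀ v, Primitive v (D^[j+1] w) → v.length ≤ (D^[j] w).length

def LeftMinimal (w : List ℕ) : Prop := ∃ v, Minimal v ∧ w <+: v
def RightMinimal (w : List ℕ) : Prop := ∃ v, Minimal v ∧ w <:+ v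
def LeftMaximal (w : List ℕ) : Prop := ∃ v, Maximal v ∧ w <+: v
def RightMaximal (w : List ℕ) : Prop := ∃ v, Maximal v ∧ w <:+ v

/-- Single-rooted minimal words. -/
def SRMin (w : List ℕ) : Prop := Minimal w ∧ (root w).length = 1

/-- Double-rooted minimal words. -/
def DRMin (w : List ℕ) : Prop := Minimal w ∧ (root w).length = 2

/-- The left frontier Ψ(w). -/
noncomputable def psi (w : List ℕ) : List ℕ :=
  (List.range (height w)).map fun i =>
    if i = 0 then w.getD 0 0
    else if (D^[i] w).getD 0 0 = 2 ∧ (D^[i-1] w).getD 0 0 ≠ (D^[i-1] w).getD 1 0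
      then 0
    else (D^[i] w).getD 0 0

/-- The single-rooted minimal word with left frontier U (if it exists). -/
noncomputable def srmOf (U : List ℕ) : List ℕ :=
  if h : ∃ w, SRMin w ∧ psi w = U then h.choose else []

/-- The double-rooted minimal word with left frontier U (if it exists). -/
noncomputable def drmOf (U : List ℕ) : List ℕ :=
  if h : ∃ w, DRMin w ∧ psi w = U then h.choose else []

/-- Γs: the right frontier of the single-rooted minimal word with left frontier U. -/
noncomputable def Gs (U : List ℕ) : List ℕ := psi (srmOf U).reverse

/-- Γd: the right frontier of the double-rooted minimal word with left frontier U. -/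
noncomputable def Gd (U : List ℕ) : List ℕ := psi (drmOf U).reverse

/-- Θ = Γs ∘ Γd. -/
noncomputable def Th (U : List ℕ) : List ℕ := Gs (Gd U)

/-- Π = Γd ∘ Γs. -/
noncomputable def Pp (U : List ℕ) : List ℕ := Gd (Gs U)

/-- One step in the graph G: from node U, the edge labeled 1 goes to U·1, the edge
labeled 2 goes to U·2, and the edge labeled 0 goes to Θ(U)·2. -/
noncomputable def step (U : List ℕ) (a : ℕ) : List ℕ :=
  if a = 1 then U ++ [1] else if a = 2 then U ++ [2] else Th U ++ [2]

/-- The endpoint of the path in G starting at the origin ε and labeled by W. -/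
noncomputable def pathEnd (W : List ℕ) : List ℕ := W.foldl step []

/-- W ∈ Σ₀^{++} labels a directed path in G from ε to U. -/
def LabelsPath (W U : List ℕ) : Prop := Spp W ∧ pathEnd W = U

/-- ‖U‖: the number of words in Σ₀^{++} labeling a path in G from ε to U. -/
noncomputable def normG (U : List ℕ) : ℕ := {W | LabelsPath W U}.ncard

/-- |U|: the length of the single-rooted minimal word with left frontier U. -/
noncomputable def len (U : List ℕ) : ℕ := (srmOf U).length

/-- u is the minimal part of w: the first (leftmost-occurring) factor of w that
is a single-rooted minimal word of the same height as w. -/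
def IsMinPart (u w : List ℕ) : Prop :=
  ∃ s t, w = s ++ u ++ t ∧ SRMin u ∧ height u = height w ∧
    ∀ u' s' t', w = s' ++ u' ++ t' → SRMin u' → height u' = height w →
      s.length ≤ s'.length

lemma trim1_nil : trim1 [] = [] := rfl
lemma trim1_one (l : List ℕ) : trim1 (1 :: l) = l := rfl
lemma trim1_cons (c : ℕ) (l : List ℕ) : trim1 (c :: l) = if c = 1 then l else c :: l := by
  match c with
  | 0 => rfl
  | 1 => rfl
  | (n+2) => rfl

lemma rle_single (a : ℕ) : rle [a] = [1] := rfl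
lemma rle_cons_cons (a b : ℕ) (l : List ℕ) :
    rle (a :: b :: l) = if a = b then (match rle (b :: l) with | [] => [1] | c :: r => (c+1)::r) else 1 :: rle (b :: l) := rfl

lemma trim1_cons_ne {c : ℕ} (l : List ℕ) (h : c ≠ 1) : trim1 (c :: l) = c :: l := by
  rw [trim1_cons, if_neg h]

lemma rle_cc_eq {a : ℕ} {l : List ℕ} {c : ℕ} {r : List ℕ} (h : rle (a :: l) = c :: r) :
    rle (a :: a :: l) = (c + 1) :: r := by
  rw [rle_cons_cons, if_pos rfl, h]

lemma rle_cc_ne {a b : ℕ} (l : List ℕ) (h : a ≠ b) :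
    rle (a :: b :: l) = 1 :: rle (b :: l) := by
  rw [rle_cons_cons, if_neg h]

lemma rle_ne_nil (a : ℕ) (l : List ℕ) : rle (a :: l) ≠ [] := by
  match l with
  | [] => simp [rle_single]
  | b :: t =>
    rw [rle_cons_cons]
    split
    · cases h : rle (b :: t) <;> simp
    · simp

lemma length_rle_le : ∀ (l : List ℕ), (rle l).length ≤ l.length
  | [] => le_refl _
  | [a] => by simp [rle_single]
  | a :: b :: l => by
    have ih := length_rle_le (b :: l)
    rw [rle_cons_cons]
    split
    · cases h : rle (b :: l) with
      | nil => exact absurd h (rle_ne_nil b l)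
      | cons c r =>
        simp only [List.length_cons]
        rw [h] at ih
        simp at ih ⊢
        omega
    · simpa using Nat.succ_le_succ ih

lemma trim1_append {l : List ℕ} (m : List ℕ) (h : l ≠ []) :
    trim1 (l ++ m) = trim1 l ++ m := by
  obtain ⟨x, l', rfl⟩ := List.exists_cons_of_ne_nil h
  rw [List.cons_append, trim1_cons, trim1_cons]
  split <;> simp

lemma length_trim1_le (l : List ℕ) : (trim1 l).length ≤ l.length := by
  match l with
  | [] => simp [trim1_nil]
  | c :: l => rw [trim1_cons]; split <;> simp

/-- Erase a trailing `1`, if any. -/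
def trimR (l : List ℕ) : List ℕ := (trim1 l.reverse).reverse

lemma trimR_nil : trimR [] = [] := rfl

lemma trimR_cons (c : ℕ) {r : List ℕ} (h : r ≠ []) : trimR (c :: r) = c :: trimR r := by
  unfold trimR
  rw [List.reverse_cons, trim1_append _ (by simpa using h), List.reverse_append]
  simp

lemma trimR_single (c : ℕ) : trimR [c] = if c = 1 then [] else [c] := by
  unfold trimR
  simp only [List.reverse_singleton, trim1_cons]
  split <;> simp

lemma length_trimR_le (l : List ℕ) : (trimR l).length ≤ l.length := by
  unfold trimR
  simpa using length_trim1_le l.reverse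

def bumpLast (l : List ℕ) : List ℕ := l.dropLast ++ [l.getLastD 0 + 1]

lemma bumpLast_concat (s : List ℕ) (c : ℕ) : bumpLast (s ++ [c]) = s ++ [c + 1] := by
  simp [bumpLast]

lemma bumpLast_cons (c : ℕ) {r : List ℕ} (h : r ≠ []) :
    bumpLast (c :: r) = c :: bumpLast r := by
  obtain ⟨x, r', rfl⟩ := List.exists_cons_of_ne_nil h
  simp [bumpLast, List.getLastD_cons]

lemma bumpLast_ne_nil (l : List ℕ) : bumpLast l ≠ [] := by simp [bumpLast]

lemma rle_append : ∀ (m : List ℕ) (a : ℕ), m ≠ [] →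
    rle (m ++ [a]) = if m.getLast? = some a then bumpLast (rle m) else rle m ++ [1]
  | [b], a, _ => by
    rcases eq_or_ne b a with rfl | h
    · have h2 : rle [b, b] = [1 + 1] := rle_cc_eq (rle_single b)
      simp [h2, rle_single, bumpLast]
    · rw [List.singleton_append, rle_cc_ne _ h]
      simp [rle_single, h]
  | b :: b' :: t, a, _ => by
    have ih := rle_append (b' :: t) a (by simp)
    have hlast : (b :: b' :: t).getLast? = (b' :: t).getLast? := List.getLast?_cons_cons ..
    rcases eq_or_ne b b' with rfl | hbb
    · obtain ⟨c, r, hcr⟩ : ∃ c r, rle (b :: t) = c :: r := by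
        cases h : rle (b :: t) with
        | nil => exact absurd h (rle_ne_nil b t)
        | cons c r => exact ⟨c, r, rfl⟩
      have h1 : rle (b :: b :: t) = (c + 1) :: r := rle_cc_eq hcr
      rw [hlast]
      split
      · rename_i hla
        rw [if_pos hla] at ih
        show rle (b :: ((b :: t) ++ [a])) = _
        rcases eq_or_ne r [] with rfl | hr
        · have : rle ((b :: t) ++ [a]) = [c + 1] := by
            rw [ih, hcr]; simp [bumpLast]
          have h2 : rle (b :: ((b :: t) ++ [a])) = (c + 1 + 1) :: [] := by
            cases t with
            | nil => exact rle_cc_eq this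
            | cons x t' => exact rle_cc_eq (l := (x :: t') ++ [a]) this
          rw [h2, h1]
          simp [bumpLast]
        · have : rle ((b :: t) ++ [a]) = c :: bumpLast r := by
            rw [ih, hcr, bumpLast_cons _ hr]
          have h2 : rle (b :: ((b :: t) ++ [a])) = (c + 1) :: bumpLast r := by
            cases t with
            | nil => exact rle_cc_eq this
            | cons x t' => exact rle_cc_eq (l := (x :: t') ++ [a]) this
          rw [h2, h1, bumpLast_cons _ hr]
      · rename_i hla
        rw [if_neg hla] at ih
        show rle (b :: ((b :: t) ++ [a])) = _
        have h2 : rle (b :: ((b :: t) ++ [a])) = (c + 1) :: (r ++ [1]) := by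
          have : rle ((b :: t) ++ [a]) = c :: (r ++ [1]) := by rw [ih, hcr]; simp
          cases t with
          | nil => exact rle_cc_eq this
          | cons x t' => exact rle_cc_eq (l := (x :: t') ++ [a]) this
        rw [h2, h1]
        simp
    · show rle (b :: ((b' :: t) ++ [a])) = _
      rw [hlast]
      have h2 : rle (b :: ((b' :: t) ++ [a])) = 1 :: rle ((b' :: t) ++ [a]) :=
        rle_cc_ne _ hbb
      have h1 : rle (b :: b' :: t) = 1 :: rle (b' :: t) := rle_cc_ne _ hbb
      rw [h2, ih, h1]
      split
      · rw [bumpLast_cons _ (rle_ne_nil b' t)]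
      · simp

lemma rle_reverse : ∀ (l : List ℕ), rle l.reverse = (rle l).reverse
  | [] => rfl
  | [a] => by simp [rle_single]
  | a :: b :: t => by
    have ih := rle_reverse (b :: t)
    have hrev : (a :: b :: t).reverse = (b :: t).reverse ++ [a] := by simp
    have hne : (b :: t).reverse ≠ [] := by simp
    rw [hrev, rle_append _ a hne, ih]
    have hlast : (b :: t).reverse.getLast? = some b := by
      rw [List.getLast?_reverse]; rfl
    rw [hlast]
    rcases eq_or_ne b a with rfl | hba
    · rw [if_pos rfl]
      obtain ⟨c, r, hcr⟩ : ∃ c r, rle (b :: t) = c :: r := by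
        cases h : rle (b :: t) with
        | nil => exact absurd h (rle_ne_nil b t)
        | cons c r => exact ⟨c, r, rfl⟩
      rw [rle_cc_eq hcr, hcr]
      simp [bumpLast_concat]
    · rw [if_neg (by simpa using hba), rle_cc_ne _ (Ne.symm hba)]
      simp

lemma D_eq (w : List ℕ) : D w = trim1 (trimR (rle w)) := rfl

lemma trimR_concat_one (m : List ℕ) : trimR (m ++ [1]) = m := by
  unfold trimR; simp [trim1_one]

lemma trimR_concat_ne {b : ℕ} (m : List ℕ) (hb : b ≠ 1) : trimR (m ++ [b]) = m ++ [b] := by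
  unfold trimR; simp [trim1_cons_ne _ hb]

lemma trim1_trimR_comm (u : List ℕ) : trim1 (trimR u) = trimR (trim1 u) := by
  induction u using List.reverseRecOn with
  | nil => rfl
  | append_singleton s b _ =>
    rcases eq_or_ne b 1 with rfl | hb
    · rw [trimR_concat_one]
      cases s with
      | nil => rfl
      | cons c s' =>
        rw [trim1_append _ (by simp : (c :: s') ≠ []), trimR_concat_one]
    · rw [trimR_concat_ne _ hb]
      cases s with
      | nil =>
        simp only [List.nil_append]
        rw [trim1_cons_ne _ hb]
        simpa using (trimR_concat_ne [] hb).symm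
      | cons c s' =>
        rw [trim1_append _ (by simp : (c :: s') ≠ []), trimR_concat_ne _ hb]

lemma D_reverse (w : List ℕ) : D w.reverse = (D w).reverse := by
  rw [D_eq, D_eq, rle_reverse]
  have h1 : trimR (rle w).reverse = (trim1 (rle w)).reverse := by
    unfold trimR; simp
  rw [h1, trim1_trimR_comm]
  unfold trimR
  simp

lemma D_nil : D [] = [] := rfl

lemma cinf_nil : Cinf [] := by
  intro k
  have h : D^[k] ([] : List ℕ) = [] := by
    induction k with
    | zero => rfl
    | succ k ih => rw [Function.iterate_succ_apply', ih, D_nil]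
  rw [h]; intro x hx; simp at hx

lemma cinf_iff (v : List ℕ) : Cinf v ↔ IsWord v ∧ Cinf (D v) := by
  constructor
  · intro h
    exact ⟨by simpa using h 0, fun k => by
      simpa [Function.iterate_succ_apply] using h (k + 1)⟩
  · rintro ⟨h0, h⟩ k
    cases k with
    | zero => simpa using h0
    | succ k => simpa [Function.iterate_succ_apply] using h k

lemma cinf_reverse {w : List ℕ} (hw : Cinf w) : Cinf w.reverse := by
  intro k
  have h : D^[k] w.reverse = (D^[k] w).reverse := by
    induction k with
    | zero => rfl
    | succ k ih => rw [Function.iterate_succ_apply', ih, D_reverse,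
        ← Function.iterate_succ_apply' D k w]
  rw [h]
  intro x hx
  exact hw k x (by simpa using hx)

lemma cinf_one : Cinf [1] := by
  rw [cinf_iff]
  exact ⟨by intro x hx; simp at hx; omega, by rw [show D [1] = [] from rfl]; exact cinf_nil⟩

-- head of rle of a C∞ word is 1 or 2
lemma rle_head {a : ℕ} {t : List ℕ} (hw : Cinf (a :: t)) {c : ℕ} {r : List ℕ}
    (hcr : rle (a :: t) = c :: r) : c = 1 ∨ c = 2 := by
  rcases eq_or_ne c 1 with rfl | hc
  · exact Or.inl rfl
  · have hmem : c ∈ D (a :: t) := by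
      rw [D_eq, hcr]
      cases r with
      | nil => rw [trimR_single, if_neg hc, trim1_cons_ne _ hc]; simp
      | cons x r' =>
        rw [trimR_cons _ (by simp), trim1_cons_ne _ hc]; simp
    have := hw 1 c (by simpa using hmem)
    tauto

-- L1: same first letter, first run length 1
lemma D_cons_eq {a : ℕ} {t : List ℕ} {r : List ℕ} (hcr : rle (a :: t) = 1 :: r) :
    D (a :: a :: t) = 2 :: D (a :: t) := by
  have h2 : rle (a :: a :: t) = 2 :: r := rle_cc_eq hcr
  rw [D_eq, D_eq, h2, hcr]
  cases r with
  | nil =>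
    rw [trimR_single, if_neg (by norm_num), trim1_cons_ne _ (by norm_num),
      trimR_single, if_pos rfl, trim1_nil]
  | cons x r' =>
    have e1 : trimR (2 :: x :: r') = 2 :: trimR (x :: r') := trimR_cons _ (by simp)
    have e2 : trimR (1 :: x :: r') = 1 :: trimR (x :: r') := trimR_cons _ (by simp)
    rw [e1, e2, trim1_one, trim1_cons_ne _ (by norm_num)]

-- L2a: different first letter, first run length 2
lemma D_cons_ne_two {a b : ℕ} {t : List ℕ} (hab : a ≠ b) {r : List ℕ}
    (hcr : rle (b :: t) = 2 :: r) : D (a :: b :: t) = D (b :: t) := by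
  have h1 : rle (a :: b :: t) = 1 :: 2 :: r := by rw [rle_cc_ne _ hab, hcr]
  rw [D_eq, D_eq, h1, hcr]
  cases r with
  | nil =>
    rw [trimR_cons _ (by simp), trim1_one, trimR_single, if_neg (by norm_num),
      trim1_cons_ne _ (by norm_num)]
  | cons x r' =>
    rw [trimR_cons _ (by simp), trim1_one, trimR_cons _ (by simp),
      trim1_cons_ne _ (by norm_num)]

-- L2b: different first letter, first run length 1, more than one run
lemma D_cons_ne_one {a b : ℕ} {t : List ℕ} (hab : a ≠ b) {x : ℕ} {r : List ℕ}
    (hcr : rle (b :: t) = 1 :: x :: r) : D (a :: b :: t) = 1 :: D (b :: t) := by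
  have h1 : rle (a :: b :: t) = 1 :: 1 :: x :: r := by rw [rle_cc_ne _ hab, hcr]
  rw [D_eq, D_eq, h1, hcr]
  rw [trimR_cons _ (by simp), trim1_one, trimR_cons _ (by simp), trim1_one]

-- L2c: different first letter, single run of length 1
lemma D_cons_ne_single {a b : ℕ} {t : List ℕ} (hab : a ≠ b)
    (hcr : rle (b :: t) = [1]) : D (a :: b :: t) = [] := by
  have h1 : rle (a :: b :: t) = [1, 1] := by rw [rle_cc_ne _ hab, hcr]
  rw [D_eq, h1]
  rw [show trimR [1, 1] = [1] from rfl, trim1_one]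

lemma length_D_lt {a : ℕ} {t : List ℕ} {r : List ℕ} (hcr : rle (a :: t) = 1 :: r) :
    (D (a :: t)).length < (a :: t).length := by
  rw [D_eq, hcr]
  cases r with
  | nil => simp [trimR_single, trim1_nil]
  | cons x r' =>
    rw [trimR_cons _ (by simp), trim1_one]
    have h1 : (trimR (x :: r')).length ≤ (x :: r').length := length_trimR_le _
    have h2 : (rle (a :: t)).length ≤ (a :: t).length := length_rle_le _
    rw [hcr] at h2
    simp at h1 h2 ⊢
    omega

lemma left_ext : ∀ (n : ℕ) (w : List ℕ), w.length ≤ n → Cinf w →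
    Cinf (1 :: w) ∨ Cinf (2 :: w) := by
  intro n
  induction n with
  | zero =>
    intro w hl _
    have : w = [] := List.eq_nil_of_length_eq_zero (Nat.le_zero.mp hl)
    subst this
    exact Or.inl cinf_one
  | succ n ih =>
    intro w hl hw
    match w with
    | [] => exact Or.inl cinf_one
    | a :: t =>
      have hword : IsWord (a :: t) := by simpa using hw 0
      have ha : a = 1 ∨ a = 2 := hword a (by simp)
      have hDc : Cinf (D (a :: t)) := ((cinf_iff _).mp hw).2
      obtain ⟨c, r, hcr⟩ : ∃ c r, rle (a :: t) = c :: r := by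
        cases h : rle (a :: t) with
        | nil => exact absurd h (rle_ne_nil a t)
        | cons c r => exact ⟨c, r, rfl⟩
      rcases rle_head hw hcr with rfl | rfl
      · -- first run has length 1
        have hlen : (D (a :: t)).length ≤ n := by
          have h1 := length_D_lt hcr
          have h2 : (a :: t).length = t.length + 1 := rfl
          have h3 : t.length + 1 ≤ n + 1 := by simpa using hl
          omega
        rcases ih (D (a :: t)) hlen hDc with h1 | h2
        · -- prepend the opposite letter b, D (b :: a :: t) ∈ {[], 1 :: D (a::t)}
          have key : ∀ b : ℕ, b ≠ a → Cinf (D (b :: a :: t)) := by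
            intro b hba
            cases r with
            | nil => rw [D_cons_ne_single hba hcr]; exact cinf_nil
            | cons x r' => rw [D_cons_ne_one hba hcr]; exact h1
          rcases ha with rfl | rfl
          · refine Or.inr ((cinf_iff _).mpr ⟨?_, key 2 (by norm_num)⟩)
            intro x hx
            rcases List.mem_cons.mp hx with rfl | hx
            · exact Or.inr rfl
            · exact hword x hx
          · refine Or.inl ((cinf_iff _).mpr ⟨?_, key 1 (by norm_num)⟩)
            intro x hx
            rcases List.mem_cons.mp hx with rfl | hx
            · exact Or.inl rfl
            · exact hword x hx
        · -- prepend the same letter a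
          have key : Cinf (D (a :: a :: t)) := by rw [D_cons_eq hcr]; exact h2
          have hword2 : IsWord (a :: a :: t) := by
            intro x hx
            rcases List.mem_cons.mp hx with rfl | hx
            · exact ha
            · exact hword x hx
          rcases ha with rfl | rfl
          · exact Or.inl ((cinf_iff _).mpr ⟨hword2, key⟩)
          · exact Or.inr ((cinf_iff _).mpr ⟨hword2, key⟩)
      · -- first run has length 2: prepend the opposite letter
        have key : ∀ b : ℕ, b ≠ a → Cinf (D (b :: a :: t)) := by
          intro b hba
          rw [D_cons_ne_two hba hcr]; exact hDc
        rcases ha with rfl | rfl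
        · refine Or.inr ((cinf_iff _).mpr ⟨?_, key 2 (by norm_num)⟩)
          intro x hx
          rcases List.mem_cons.mp hx with rfl | hx
          · exact Or.inr rfl
          · exact hword x hx
        · refine Or.inl ((cinf_iff _).mpr ⟨?_, key 1 (by norm_num)⟩)
          intro x hx
          rcases List.mem_cons.mp hx with rfl | hx
          · exact Or.inl rfl
          · exact hword x hx


/-- every C∞-word extends to the left and to the right inside C∞. -/
theorem one_letter_extension (w : List ℕ) (hw : Cinf w) :
    (Cinf (1 :: w) ∨ Cinf (2 :: w)) ∧ (Cinf (w ++ [1]) ∨ Cinf (w ++ [2])) := by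
  constructor
  · exact left_ext w.length w le_rfl hw
  · have hrev := left_ext w.reverse.length w.reverse le_rfl (cinf_reverse hw)
    rcases hrev with h | h
    · left
      have := cinf_reverse h
      simpa using this
    · right
      have := cinf_reverse h
      simpa using this

end CInfWords
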